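/- Let d ≥ 2 and let G be a finite simple graph with n vertices and m edges satisfying m ≥ n ≥ 1. If G admits a crossing-free circular-arc drawing in ℝ^d covered by a family of r circles, then r ≥ ½(1 + √(2m²/n − 2m + 1)). -/

import Mathlib

open Set

noncomputable section

/-- An `l`-dimensional sphere in `ℝ^d`: the set of points of an `(l+1)`-dimensional affine
subspace `P` of `ℝ^d` at a fixed positive distance `r` from a center `c ∈ P`. -/
def IsSphereDim (d l : ℕ) (S : Set (EuclideanSpace ℝ (Fin d))) : Prop :=
  ∃ (P : AffineSubspace ℝ (EuclideanSpace ℝ (Fin d))) (c : EuclideanSpace ℝ (Fin d)) (r : ℝ),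
    Module.finrank ℝ P.direction = l + 1 ∧ c ∈ P ∧ 0 < r ∧
    S = {x | x ∈ P ∧ dist x c = r}

/-- A circle in `ℝ^d` is a 1-dimensional sphere. -/
def IsCircle (d : ℕ) (S : Set (EuclideanSpace ℝ (Fin d))) : Prop :=
  IsSphereDim d 1 S

/-- An arc in `ℝ^d`: a nonempty compact connected subset of a circle. -/
def IsArc (d : ℕ) (A : Set (EuclideanSpace ℝ (Fin d))) : Prop :=
  ∃ C, IsCircle d C ∧ A ⊆ C ∧ IsCompact A ∧ IsConnected A

/-- A crossing-free circular-arc drawing of a simple graph `G` in `ℝ^d`: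
vertices are mapped injectively to points, every edge `e = uv` is represented by an arc
`arc e` containing the images of `u` and `v`, the arcs of two distinct edges intersect
exactly in the images of the common endpoints of those edges, and the image of a vertex `w`
lies on the arc of an edge `e` only if `w` is an endpoint of `e`. -/
structure CircularArcDrawing (d : ℕ) {V : Type*} (G : SimpleGraph V) where
  pos : V → EuclideanSpace ℝ (Fin d)
  inj : Function.Injective pos
  arc : Sym2 V → Set (EuclideanSpace ℝ (Fin d))
  arc_isArc : ∀ e ∈ G.edgeSet, IsArc d (arc e)
  endpoint_mem : ∀ e ∈ G.edgeSet, ∀ v ∈ e, pos v ∈ arc e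
  crossFree : ∀ e ∈ G.edgeSet, ∀ f ∈ G.edgeSet, e ≠ f →
    arc e ∩ arc f = pos '' {w | w ∈ e ∧ w ∈ f}
  vertex_mem : ∀ e ∈ G.edgeSet, ∀ w, pos w ∈ arc e → w ∈ e

/-- The drawing `D` is covered by the family `𝒞` of sets:
every arc of `D` is contained in some member of `𝒞`. -/
def CircularArcDrawing.CoveredBy {d : ℕ} {V : Type*} {G : SimpleGraph V}
    (D : CircularArcDrawing d G) (𝒞 : Finset (Set (EuclideanSpace ℝ (Fin d)))) : Prop :=
  ∀ e ∈ G.edgeSet, ∃ C ∈ 𝒞, D.arc e ⊆ C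

section helpers
local notation "π" => Real.pi

lemma nat_mul_pred (n : ℕ) : n * (n - 1) = n * n - n := by
  cases n with
  | zero => rfl
  | succ k => rw [Nat.succ_sub_one, Nat.mul_succ, Nat.add_sub_cancel]

lemma nat_mul_self_eq (n : ℕ) : n * n = n * (n - 1) + n := by
  cases n with
  | zero => rfl
  | succ k => rw [Nat.succ_sub_one, Nat.mul_succ]

end helpers

lemma circle_inter_lt_three {d : ℕ} {C C' : Set (EuclideanSpace ℝ (Fin d))}
    (hC : IsCircle d C) (hC' : IsCircle d C') (hne : C ≠ C')
    {p q s : EuclideanSpace ℝ (Fin d)}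
    (hp : p ∈ C ∩ C') (hq : q ∈ C ∩ C') (hs : s ∈ C ∩ C')
    (hpq : p ≠ q) (hps : p ≠ s) (hqs : q ≠ s) : False := by
  obtain ⟨P, c, ρ, hfr, hcP, hρ, hCeq⟩ := hC
  obtain ⟨P', c', ρ', hfr', hcP', hρ', hCeq'⟩ := hC'
  set pts : Fin 3 → EuclideanSpace ℝ (Fin d) := ![p, q, s] with hpts
  have hinj : Function.Injective pts := by
    intro i j hij
    rw [hpts] at hij
    fin_cases i <;> fin_cases j <;>
      simp only [Matrix.cons_val_zero, Matrix.cons_val_one, Matrix.head_cons,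
        Matrix.cons_val_two, Matrix.tail_cons] at hij <;>
      first
        | rfl
        | exact absurd hij hpq | exact absurd hij hps | exact absurd hij hqs
        | exact absurd hij.symm hpq | exact absurd hij.symm hps | exact absurd hij.symm hqs
  have hmemC : ∀ i, pts i ∈ C := by
    intro i; fin_cases i <;> simp [hpts, hp.1, hq.1, hs.1]
  have hmemC' : ∀ i, pts i ∈ C' := by
    intro i; fin_cases i <;> simp [hpts, hp.2, hq.2, hs.2]
  have hdistC : ∀ i, dist (pts i) c = ρ := by
    intro i; have := hmemC i; rw [hCeq] at this; exact this.2
  have hdistC' : ∀ i, dist (pts i) c' = ρ' := by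
    intro i; have := hmemC' i; rw [hCeq'] at this; exact this.2
  have hcos : EuclideanGeometry.Cospherical (Set.range pts) :=
    ⟨c, ρ, by rintro x ⟨i, rfl⟩; exact hdistC i⟩
  have hai : AffineIndependent ℝ pts := hcos.affineIndependent subset_rfl hinj
  set sx : Affine.Simplex ℝ (EuclideanSpace ℝ (Fin d)) 2 := ⟨pts, hai⟩ with hsx
  set Q : AffineSubspace ℝ (EuclideanSpace ℝ (Fin d)) := affineSpan ℝ (Set.range pts) with hQ
  have hQfr : Module.finrank ℝ Q.direction = 2 := by
    rw [hQ, direction_affineSpan]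
    exact hai.finrank_vectorSpan (by simp)
  have hspan : ∀ (R : AffineSubspace ℝ (EuclideanSpace ℝ (Fin d))),
      Module.finrank ℝ R.direction = 2 → (∀ i, pts i ∈ R) → Q = R := by
    intro R hRfr hmem
    have hle : Q ≤ R := by
      rw [hQ, affineSpan_le]
      rintro x ⟨i, rfl⟩; exact hmem i
    have hdir : Q.direction = R.direction :=
      Submodule.eq_of_le_of_finrank_eq (AffineSubspace.direction_le hle)
        (hQfr.trans hRfr.symm)
    exact AffineSubspace.ext_of_direction_eq hdir
      ⟨pts 0, mem_affineSpan ℝ (Set.mem_range_self 0), hmem 0⟩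
  have hQP : Q = P := hspan P hfr fun i => ((hCeq ▸ hmemC i : _)).1
  have hQP' : Q = P' := hspan P' hfr' fun i => ((hCeq' ▸ hmemC' i : _)).1
  have hcQ : c ∈ Q := hQP.symm ▸ hcP
  have hcQ' : c' ∈ Q := hQP'.symm ▸ hcP'
  have hc1 : c = sx.circumcenter := sx.eq_circumcenter_of_dist_eq hcQ hdistC
  have hc2 : c' = sx.circumcenter := sx.eq_circumcenter_of_dist_eq hcQ' hdistC'
  have hcc : c = c' := hc1.trans hc2.symm
  have hρρ : ρ = ρ' := by rw [← hdistC 0, ← hdistC' 0, hcc]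
  have hPP' : P = P' := hQP.symm.trans hQP'
  exact hne (by rw [hCeq, hCeq', hPP', hcc, hρρ])

local notation "π" => Real.pi

lemma cexp_abs (θ : ℝ) : ‖Complex.exp (θ * Complex.I)‖ = 1 :=
  Complex.norm_exp_ofReal_mul_I θ

lemma cexp_arg {θ : ℝ} (hθ : θ ∈ Set.Ioc (-π) π) :
    Complex.arg (Complex.exp (θ * Complex.I)) = θ := by
  rw [Complex.exp_mul_I]
  exact Complex.arg_cos_add_sin_mul_I hθ

lemma eq_cexp_arg {z : ℂ} (hz : ‖z‖ = 1) :
    Complex.exp ((Complex.arg z : ℝ) * Complex.I) = z := by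
  have := Complex.norm_mul_exp_arg_mul_I z
  rwa [hz, Complex.ofReal_one, one_mul] at this

lemma cexp_mem_slitPlane {θ : ℝ} (hθ : θ ∈ Set.Ioo (-π) π) :
    Complex.exp (θ * Complex.I) ∈ Complex.slitPlane := by
  rw [Complex.mem_slitPlane_iff_arg]
  refine ⟨?_, Complex.exp_ne_zero _⟩
  rw [cexp_arg ⟨hθ.1, le_of_lt hθ.2⟩]
  exact ne_of_lt hθ.2

/-- Tail lemma: a preconnected subset of the unit circle containing `-1` and the point
at angle `t` contains all points at angles in `(t, π)` or all points at angles in `(-π, t)`. -/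
lemma tail_lemma {B : Set ℂ} (hB : IsPreconnected B) (hsub : ∀ z ∈ B, ‖z‖ = 1)
    (hm : (-1 : ℂ) ∈ B) {t : ℝ} (ht : t ∈ Set.Ioo (-π) π)
    (htB : Complex.exp (t * Complex.I) ∈ B) :
    (∀ θ ∈ Set.Ioo t π, Complex.exp (θ * Complex.I) ∈ B) ∨
      (∀ θ ∈ Set.Ioo (-π) t, Complex.exp (θ * Complex.I) ∈ B) := by
  by_contra hcon
  push_neg at hcon
  obtain ⟨⟨u, hu, huB⟩, ⟨l, hl, hlB⟩⟩ := hcon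
  have hlu : l < u := lt_trans hl.2 hu.1
  have hlmem : l ∈ Set.Ioo (-π) π := ⟨hl.1, lt_trans hl.2 ht.2⟩
  have humem : u ∈ Set.Ioo (-π) π := ⟨lt_trans ht.1 hu.1, hu.2⟩
  set e : ℝ → ℂ := fun θ => Complex.exp (θ * Complex.I) with he
  have hecont : Continuous e := by
    exact Complex.continuous_exp.comp ((Complex.continuous_ofReal).mul continuous_const)
  set S : Set ℂ := e '' Set.Icc l u with hS
  set O : Set ℂ := Complex.slitPlane ∩ Complex.arg ⁻¹' (Set.Ioo l u) with hO
  have hOopen : IsOpen O :=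
    ContinuousOn.isOpen_inter_preimage
      (fun z hz => (Complex.continuousAt_arg hz).continuousWithinAt)
      Complex.isOpen_slitPlane isOpen_Ioo
  have hSclosed : IsClosed S := ((isCompact_Icc).image hecont).isClosed
  have hkey : B ∩ O = B ∩ S := by
    ext z
    constructor
    · rintro ⟨hzB, hsl, harg⟩
      refine ⟨hzB, Complex.arg z, ⟨le_of_lt harg.1, le_of_lt harg.2⟩, eq_cexp_arg (hsub z hzB)⟩
    · rintro ⟨hzB, θ, hθ, rfl⟩
      have hθl : θ ≠ l := by rintro rfl; exact hlB hzB
      have hθu : θ ≠ u := by rintro rfl; exact huB hzB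
      have hθoo : θ ∈ Set.Ioo l u := ⟨lt_of_le_of_ne hθ.1 (Ne.symm hθl), lt_of_le_of_ne hθ.2 hθu⟩
      have hθpi : θ ∈ Set.Ioo (-π) π := ⟨lt_trans hlmem.1 hθoo.1, lt_trans hθoo.2 humem.2⟩
      refine ⟨hzB, cexp_mem_slitPlane hθpi, ?_⟩
      rw [Set.mem_preimage, cexp_arg ⟨hθpi.1, le_of_lt hθpi.2⟩]
      exact hθoo
  have hcov : B ⊆ O ∪ Sᶜ := by
    intro z hz
    by_cases hzS : z ∈ S
    · exact Or.inl (hkey.symm ▸ Set.mem_inter hz hzS : z ∈ B ∩ O).2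
    · exact Or.inr hzS
  have hBO : (B ∩ O).Nonempty := by
    refine ⟨e t, htB, cexp_mem_slitPlane ht, ?_⟩
    rw [Set.mem_preimage, he]
    simp only []
    rw [cexp_arg ⟨ht.1, le_of_lt ht.2⟩]
    exact ⟨hl.2, hu.1⟩
  have hBS : (B ∩ Sᶜ).Nonempty := by
    refine ⟨-1, hm, ?_⟩
    rintro ⟨θ, hθ, hθe⟩
    have hθpi : θ ∈ Set.Ioc (-π) π :=
      ⟨lt_of_lt_of_le hlmem.1 hθ.1, le_of_lt (lt_of_le_of_lt hθ.2 humem.2)⟩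
    have : Complex.arg (e θ) = θ := cexp_arg hθpi
    rw [hθe, Complex.arg_neg_one] at this
    exact absurd this.symm (ne_of_lt (lt_of_le_of_lt hθ.2 humem.2))
  obtain ⟨z, hzB, hzO, hzS⟩ := hB O Sᶜ hOopen hSclosed.isOpen_compl hcov hBO hBS
  exact hzS ((hkey ▸ Set.mem_inter hzB hzO : z ∈ B ∩ S)).2

lemma tails_right {B B' : Set ℂ} {t t' : ℝ} (ht : t ∈ Set.Ioo (-π) π) (ht' : t' ∈ Set.Ioo (-π) π)
    (h1 : ∀ θ ∈ Set.Ioo t π, Complex.exp (θ * Complex.I) ∈ B)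
    (h2 : ∀ θ ∈ Set.Ioo t' π, Complex.exp (θ * Complex.I) ∈ B')
    (hd : B ∩ B' ⊆ {-1}) : False := by
  set s : ℝ := (max t t' + π) / 2 with hs
  have hmax : max t t' < π := max_lt ht.2 ht'.2
  have hs1 : max t t' < s := by rw [hs]; linarith
  have hs2 : s < π := by rw [hs]; linarith
  have hsB : Complex.exp (s * Complex.I) ∈ B := h1 s ⟨lt_of_le_of_lt (le_max_left _ _) hs1, hs2⟩
  have hsB' : Complex.exp (s * Complex.I) ∈ B' := h2 s ⟨lt_of_le_of_lt (le_max_right _ _) hs1, hs2⟩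
  have : Complex.exp (s * Complex.I) = -1 := hd ⟨hsB, hsB'⟩
  have harg : Complex.arg (Complex.exp (s * Complex.I)) = s :=
    cexp_arg ⟨lt_of_lt_of_le ht.1 (le_trans (le_max_left _ _) (le_of_lt hs1)), le_of_lt hs2⟩
  rw [this, Complex.arg_neg_one] at harg
  exact absurd harg.symm (ne_of_lt hs2)

lemma tails_left {B B' : Set ℂ} {t t' : ℝ} (ht : t ∈ Set.Ioo (-π) π) (ht' : t' ∈ Set.Ioo (-π) π)
    (h1 : ∀ θ ∈ Set.Ioo (-π) t, Complex.exp (θ * Complex.I) ∈ B)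
    (h2 : ∀ θ ∈ Set.Ioo (-π) t', Complex.exp (θ * Complex.I) ∈ B')
    (hd : B ∩ B' ⊆ {-1}) : False := by
  set s : ℝ := (min t t' + -π) / 2 with hs
  have hmin : -π < min t t' := lt_min ht.1 ht'.1
  have hs1 : s < min t t' := by rw [hs]; linarith
  have hs2 : -π < s := by rw [hs]; linarith
  have hsB : Complex.exp (s * Complex.I) ∈ B := h1 s ⟨hs2, lt_of_lt_of_le hs1 (min_le_left _ _)⟩
  have hsB' : Complex.exp (s * Complex.I) ∈ B' := h2 s ⟨hs2, lt_of_lt_of_le hs1 (min_le_right _ _)⟩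
  have : Complex.exp (s * Complex.I) = -1 := hd ⟨hsB, hsB'⟩
  have hsπ : s < π := lt_trans (lt_of_lt_of_le hs1 (min_le_left _ _)) ht.2
  have harg : Complex.arg (Complex.exp (s * Complex.I)) = s := cexp_arg ⟨hs2, le_of_lt hsπ⟩
  rw [this, Complex.arg_neg_one] at harg
  exact absurd harg.symm (ne_of_lt hsπ)

lemma arg_mem_Ioo_of_ne_neg_one {z : ℂ} (hz : ‖z‖ = 1) (hne : z ≠ -1) :
    Complex.arg z ∈ Set.Ioo (-π) π := by
  refine ⟨(Complex.arg_mem_Ioc z).1, lt_of_le_of_ne (Complex.arg_mem_Ioc z).2 ?_⟩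
  intro hπ
  apply hne
  rw [← eq_cexp_arg hz, hπ, Complex.exp_pi_mul_I]

/-- Three preconnected subsets of the unit circle, each containing `-1` and another point,
cannot pairwise intersect only in `-1`. -/
lemma three_arcs_complex {B₁ B₂ B₃ : Set ℂ}
    (hc1 : IsPreconnected B₁) (hc2 : IsPreconnected B₂) (hc3 : IsPreconnected B₃)
    (hs1 : ∀ z ∈ B₁, ‖z‖ = 1) (hs2 : ∀ z ∈ B₂, ‖z‖ = 1)
    (hs3 : ∀ z ∈ B₃, ‖z‖ = 1)
    (hm1 : (-1 : ℂ) ∈ B₁) (hm2 : (-1 : ℂ) ∈ B₂) (hm3 : (-1 : ℂ) ∈ B₃)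
    {q₁ q₂ q₃ : ℂ} (hq1 : q₁ ∈ B₁) (hq2 : q₂ ∈ B₂) (hq3 : q₃ ∈ B₃)
    (hn1 : q₁ ≠ -1) (hn2 : q₂ ≠ -1) (hn3 : q₃ ≠ -1)
    (h12 : B₁ ∩ B₂ ⊆ {-1}) (h13 : B₁ ∩ B₃ ⊆ {-1}) (h23 : B₂ ∩ B₃ ⊆ {-1}) : False := by
  have ht1 := arg_mem_Ioo_of_ne_neg_one (hs1 q₁ hq1) hn1
  have ht2 := arg_mem_Ioo_of_ne_neg_one (hs2 q₂ hq2) hn2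
  have ht3 := arg_mem_Ioo_of_ne_neg_one (hs3 q₃ hq3) hn3
  have hb1 := tail_lemma hc1 hs1 hm1 ht1 (by rw [eq_cexp_arg (hs1 q₁ hq1)]; exact hq1)
  have hb2 := tail_lemma hc2 hs2 hm2 ht2 (by rw [eq_cexp_arg (hs2 q₂ hq2)]; exact hq2)
  have hb3 := tail_lemma hc3 hs3 hm3 ht3 (by rw [eq_cexp_arg (hs3 q₃ hq3)]; exact hq3)
  rcases hb1 with hb1 | hb1 <;> rcases hb2 with hb2 | hb2 <;> rcases hb3 with hb3 | hb3
  · exact tails_right ht1 ht2 hb1 hb2 h12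
  · exact tails_right ht1 ht2 hb1 hb2 h12
  · exact tails_right ht1 ht3 hb1 hb3 h13
  · exact tails_left ht2 ht3 hb2 hb3 h23
  · exact tails_right ht2 ht3 hb2 hb3 h23
  · exact tails_left ht1 ht3 hb1 hb3 h13
  · exact tails_left ht1 ht2 hb1 hb2 h12
  · exact tails_left ht1 ht2 hb1 hb2 h12

/-- Three connected subsets of a circle, all containing a common point `p` and each containing
another point, cannot pairwise intersect only in `p`. -/
lemma three_arcs_circle {d : ℕ} {C : Set (EuclideanSpace ℝ (Fin d))} (hC : IsCircle d C)
    {A₁ A₂ A₃ : Set (EuclideanSpace ℝ (Fin d))}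
    (hA1 : A₁ ⊆ C) (hA2 : A₂ ⊆ C) (hA3 : A₃ ⊆ C)
    (hc1 : IsPreconnected A₁) (hc2 : IsPreconnected A₂) (hc3 : IsPreconnected A₃)
    {p q₁ q₂ q₃ : EuclideanSpace ℝ (Fin d)}
    (hp1 : p ∈ A₁) (hp2 : p ∈ A₂) (hp3 : p ∈ A₃)
    (hq1 : q₁ ∈ A₁) (hq2 : q₂ ∈ A₂) (hq3 : q₃ ∈ A₃)
    (hn1 : q₁ ≠ p) (hn2 : q₂ ≠ p) (hn3 : q₃ ≠ p)
    (h12 : A₁ ∩ A₂ ⊆ {p}) (h13 : A₁ ∩ A₃ ⊆ {p}) (h23 : A₂ ∩ A₃ ⊆ {p}) : False := by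
  obtain ⟨P, c, ρ, hfr, hcP, hρ, hCeq⟩ := hC
  set W := P.direction with hW
  have hW2 : Module.finrank ℝ W = 2 := hfr
  set ob : OrthonormalBasis (Fin 2) ℝ W :=
    (stdOrthonormalBasis ℝ W).reindex (finCongr hW2) with hob
  set f : ℂ ≃ₗᵢ[ℝ] W := Complex.isometryOfOrthonormal ob with hf
  set φ : ℂ → EuclideanSpace ℝ (Fin d) := fun z => c + (f z : EuclideanSpace ℝ (Fin d)) with hφ
  set ψ : EuclideanSpace ℝ (Fin d) → ℂ :=
    fun x => f.symm (W.orthogonalProjectionOnto (x - c)) with hψ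
  have hψφ : ∀ x ∈ P, φ (ψ x) = x := by
    intro x hx
    have hmem : x - c ∈ W := AffineSubspace.vsub_mem_direction hx hcP
    have : W.orthogonalProjectionOnto (x - c) = ⟨x - c, hmem⟩ :=
      Submodule.orthogonalProjectionOnto_mem_subspace_eq_self (⟨x - c, hmem⟩ : W)
    rw [hφ, hψ]
    simp only [this, LinearIsometryEquiv.apply_symm_apply]
    abel
  have hCP : ∀ x ∈ C, x ∈ P ∧ dist x c = ρ := by intro x hx; rwa [hCeq] at hx
  have hφdist : ∀ z : ℂ, dist (φ z) c = ‖z‖ := by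
    intro z
    rw [hφ]
    simp only [dist_eq_norm, add_sub_cancel_left]
    rw [Submodule.norm_coe, f.norm_map]
  have hψabs : ∀ x ∈ C, ‖ψ x‖ = ρ := by
    intro x hx
    rw [← hφdist (ψ x), hψφ x (hCP x hx).1]
    exact (hCP x hx).2
  have hψinj : ∀ x ∈ C, ∀ y ∈ C, ψ x = ψ y → x = y := by
    intro x hx y hy hxy
    rw [← hψφ x (hCP x hx).1, ← hψφ y (hCP y hy).1, hxy]
  set p₀ : ℂ := ψ p with hp₀
  have habsp₀ : ‖p₀‖ = ρ := hψabs p (hA1 hp1)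
  have hp₀ne : p₀ ≠ 0 := by
    intro h; rw [h] at habsp₀; simp at habsp₀; exact (ne_of_gt hρ) habsp₀.symm
  set g : EuclideanSpace ℝ (Fin d) → ℂ := fun x => -(ψ x) / p₀ with hg
  have hgcont : Continuous g := by
    apply Continuous.div_const
    apply Continuous.neg
    exact f.symm.continuous.comp
      ((W.orthogonalProjectionOnto).cont.comp (continuous_id.sub continuous_const))
  have hgabs : ∀ x ∈ C, ‖g x‖ = 1 := by
    intro x hx
    rw [hg]
    simp only [norm_div, norm_neg]
    rw [hψabs x hx, habsp₀, div_self (ne_of_gt hρ)]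
  have hginj : ∀ x ∈ C, ∀ y ∈ C, g x = g y → x = y := by
    intro x hx y hy hxy
    rw [hg] at hxy
    simp only [div_eq_div_iff hp₀ne hp₀ne, neg_eq_iff_eq_neg, neg_neg] at hxy
    exact hψinj x hx y hy (by field_simp at hxy; exact neg_inj.mp hxy)
  have hgp : g p = -1 := by
    rw [hg]; simp only [← hp₀]; rw [neg_div, div_self hp₀ne]
  apply three_arcs_complex (B₁ := g '' A₁) (B₂ := g '' A₂) (B₃ := g '' A₃)
    (hc1.image g hgcont.continuousOn) (hc2.image g hgcont.continuousOn)
    (hc3.image g hgcont.continuousOn)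
    (by rintro z ⟨x, hx, rfl⟩; exact hgabs x (hA1 hx))
    (by rintro z ⟨x, hx, rfl⟩; exact hgabs x (hA2 hx))
    (by rintro z ⟨x, hx, rfl⟩; exact hgabs x (hA3 hx))
    (⟨p, hp1, hgp⟩) (⟨p, hp2, hgp⟩) (⟨p, hp3, hgp⟩)
    (⟨q₁, hq1, rfl⟩) (⟨q₂, hq2, rfl⟩) (⟨q₃, hq3, rfl⟩)
    (fun h => hn1 (hginj q₁ (hA1 hq1) p (hA1 hp1) (h.trans hgp.symm)))
    (fun h => hn2 (hginj q₂ (hA2 hq2) p (hA2 hp2) (h.trans hgp.symm)))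
    (fun h => hn3 (hginj q₃ (hA3 hq3) p (hA3 hp3) (h.trans hgp.symm)))
  · rintro z ⟨⟨x, hx1, rfl⟩, ⟨y, hy2, hyz⟩⟩
    have hxy : x = y := hginj x (hA1 hx1) y (hA2 hy2) hyz.symm
    have : x = p := h12 ⟨hx1, hxy ▸ hy2⟩
    rw [this, hgp]; rfl
  · rintro z ⟨⟨x, hx1, rfl⟩, ⟨y, hy3, hyz⟩⟩
    have hxy : x = y := hginj x (hA1 hx1) y (hA3 hy3) hyz.symm
    have : x = p := h13 ⟨hx1, hxy ▸ hy3⟩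
    rw [this, hgp]; rfl
  · rintro z ⟨⟨x, hx2, rfl⟩, ⟨y, hy3, hyz⟩⟩
    have hxy : x = y := hginj x (hA2 hx2) y (hA3 hy3) hyz.symm
    have : x = p := h23 ⟨hx2, hxy ▸ hy3⟩
    rw [this, hgp]; rfl

/-- If a finite simple graph `G` with `n` vertices and `m` edges, `m ≥ n ≥ 1`, admits a
crossing-free circular-arc drawing in `ℝ^d` (`d ≥ 2`) covered by a family of `r` circles,
then `r ≥ (1 + √(2m²/n − 2m + 1))/2`. -/
theorem circle_cover_lower_bound_edges {d : ℕ} (hd : 2 ≤ d) {V : Type*} [Fintype V]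
    (G : SimpleGraph V) (n m : ℕ)
    (hn : n = Fintype.card V) (hm : m = G.edgeSet.ncard)
    (hn1 : 1 ≤ n) (hnm : n ≤ m)
    (D : CircularArcDrawing d G)
    (𝒞 : Finset (Set (EuclideanSpace ℝ (Fin d))))
    (hcirc : ∀ C ∈ 𝒞, IsCircle d C) (hcov : D.CoveredBy 𝒞)
    (r : ℕ) (hr : 𝒞.card = r) :
    (1 + Real.sqrt (2 * (m : ℝ) ^ 2 / (n : ℝ) - 2 * (m : ℝ) + 1)) / 2 ≤ (r : ℝ) := by
  classical
  have hfin : G.edgeSet.Finite := Set.toFinite _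
  set edges : Finset (Sym2 V) := hfin.toFinset with hedges
  have hm_edges : m = edges.card := by rw [hm]; exact Set.ncard_eq_toFinset_card _ hfin
  set χ : Sym2 V → Set (EuclideanSpace ℝ (Fin d)) :=
    fun e => if he : e ∈ G.edgeSet then (hcov e he).choose else ∅ with hχdef
  have hχ : ∀ e ∈ G.edgeSet, χ e ∈ 𝒞 ∧ D.arc e ⊆ χ e := by
    intro e he
    rw [hχdef]
    simp only [dif_pos he]
    exact ⟨(hcov e he).choose_spec.1, (hcov e he).choose_spec.2⟩
  set t : V → ℕ := fun v => (𝒞.filter (fun C => D.pos v ∈ C)).card with htdef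
  -- Step A : per-circle bound
  have hA : ∀ C ∈ 𝒞, (edges.filter (fun e => χ e = C)).card ≤
      (Finset.univ.filter (fun v => D.pos v ∈ C)).card := by
    intro C hCmem
    set EC := edges.filter (fun e => χ e = C) with hECdef
    have hEsub : ∀ e ∈ EC, e ∈ G.edgeSet ∧ D.arc e ⊆ C := by
      intro e he
      rw [hECdef, Finset.mem_filter] at he
      have heE := hfin.mem_toFinset.mp he.1
      exact ⟨heE, he.2 ▸ (hχ e heE).2⟩
    have hdeg : ∀ v : V, (EC.filter (fun e => v ∈ e)).card ≤ 2 := by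
      intro v
      by_contra hgt
      push_neg at hgt
      obtain ⟨e₁, e₂, e₃, h1, h2, h3, h12, h13, h23⟩ := Finset.two_lt_card_iff.mp hgt
      rw [Finset.mem_filter] at h1 h2 h3
      obtain ⟨u₁, hu₁⟩ := Sym2.mem_iff_exists.mp h1.2
      obtain ⟨u₂, hu₂⟩ := Sym2.mem_iff_exists.mp h2.2
      obtain ⟨u₃, hu₃⟩ := Sym2.mem_iff_exists.mp h3.2
      have hadj₁ : G.Adj v u₁ := G.mem_edgeSet.mp (hu₁ ▸ (hEsub e₁ h1.1).1)
      have hadj₂ : G.Adj v u₂ := G.mem_edgeSet.mp (hu₂ ▸ (hEsub e₂ h2.1).1)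
      have hadj₃ : G.Adj v u₃ := G.mem_edgeSet.mp (hu₃ ▸ (hEsub e₃ h3.1).1)
      have hinter : ∀ (e f : Sym2 V) (u w : V), e ∈ EC → f ∈ EC → e ≠ f →
          e = s(v, u) → f = s(v, w) → u ≠ v → w ≠ v →
          D.arc e ∩ D.arc f ⊆ {D.pos v} := by
        intro e f u w he hf hef heu hfw huv hwv
        rw [D.crossFree e (hEsub e he).1 f (hEsub f hf).1 hef]
        rintro x ⟨z, ⟨hz1, hz2⟩, rfl⟩
        have hzv : z = v := by
          rw [heu] at hz1
          rw [hfw] at hz2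
          rcases Sym2.mem_iff.mp hz1 with rfl | rfl
          · rfl
          · rcases Sym2.mem_iff.mp hz2 with h | h
            · exact absurd h huv
            · exact absurd (heu.trans (by rw [hfw, h])) hef
        rw [hzv]
        exact Set.mem_singleton _
      have hpre : ∀ e ∈ EC, IsPreconnected (D.arc e) := by
        intro e he
        obtain ⟨_, _, _, _, hconn⟩ := D.arc_isArc e (hEsub e he).1
        exact hconn.isPreconnected
      exact three_arcs_circle (hcirc C hCmem)
        (hEsub e₁ h1.1).2 (hEsub e₂ h2.1).2 (hEsub e₃ h3.1).2
        (hpre e₁ h1.1) (hpre e₂ h2.1) (hpre e₃ h3.1)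
        (D.endpoint_mem e₁ (hEsub e₁ h1.1).1 v h1.2)
        (D.endpoint_mem e₂ (hEsub e₂ h2.1).1 v h2.2)
        (D.endpoint_mem e₃ (hEsub e₃ h3.1).1 v h3.2)
        (D.endpoint_mem e₁ (hEsub e₁ h1.1).1 u₁ (by rw [hu₁]; exact Sym2.mem_mk_right v u₁))
        (D.endpoint_mem e₂ (hEsub e₂ h2.1).1 u₂ (by rw [hu₂]; exact Sym2.mem_mk_right v u₂))
        (D.endpoint_mem e₃ (hEsub e₃ h3.1).1 u₃ (by rw [hu₃]; exact Sym2.mem_mk_right v u₃))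
        (fun h => hadj₁.ne' (D.inj h))
        (fun h => hadj₂.ne' (D.inj h))
        (fun h => hadj₃.ne' (D.inj h))
        (hinter e₁ e₂ u₁ u₂ h1.1 h2.1 h12 hu₁ hu₂ hadj₁.ne' hadj₂.ne')
        (hinter e₁ e₃ u₁ u₃ h1.1 h3.1 h13 hu₁ hu₃ hadj₁.ne' hadj₃.ne')
        (hinter e₂ e₃ u₂ u₃ h2.1 h3.1 h23 hu₂ hu₃ hadj₂.ne' hadj₃.ne')
    have hcard2 : ∀ e ∈ EC, (Finset.univ.filter (fun w => w ∈ e)).card = 2 := by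
      intro e he
      have hdiag : ¬ e.IsDiag := G.not_isDiag_of_mem_edgeSet (hEsub e he).1
      clear he
      revert hdiag
      refine Sym2.ind (fun a b => ?_) e
      intro hdiag
      have hab : a ≠ b := fun h => hdiag (Sym2.mk_isDiag_iff.mpr h)
      have : Finset.univ.filter (fun w => w ∈ s(a, b)) = {a, b} := by
        ext x
        simp [Sym2.mem_iff]
      rw [this, Finset.card_insert_of_notMem (by simpa using hab), Finset.card_singleton]
    have hstep : 2 * EC.card ≤ 2 * (Finset.univ.filter (fun v => D.pos v ∈ C)).card := by
      calc 2 * EC.card = ∑ _e ∈ EC, 2 := by rw [Finset.sum_const, smul_eq_mul, mul_comm]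
        _ = ∑ e ∈ EC, (Finset.univ.filter (fun w => w ∈ e)).card :=
            (Finset.sum_congr rfl hcard2).symm
        _ = ∑ v : V, (EC.filter (fun e => v ∈ e)).card := by
            simp_rw [Finset.card_filter]; exact Finset.sum_comm
        _ = ∑ v ∈ Finset.univ.filter (fun v => D.pos v ∈ C),
              (EC.filter (fun e => v ∈ e)).card := by
            symm
            apply Finset.sum_subset (Finset.subset_univ _)
            intro v _ hv
            rw [Finset.card_eq_zero, Finset.filter_eq_empty_iff]
            intro e he hve
            apply hv
            rw [Finset.mem_filter]
            exact ⟨Finset.mem_univ v,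
              (hEsub e he).2 (D.endpoint_mem e (hEsub e he).1 v hve)⟩
        _ ≤ ∑ _v ∈ Finset.univ.filter (fun v => D.pos v ∈ C), 2 :=
            Finset.sum_le_sum (fun v _ => hdeg v)
        _ = 2 * (Finset.univ.filter (fun v => D.pos v ∈ C)).card := by
            rw [Finset.sum_const, smul_eq_mul, mul_comm]
    exact Nat.le_of_mul_le_mul_left hstep (by norm_num)
  -- Step B : m ≤ ∑ t
  have hfiber : edges.card = ∑ C ∈ 𝒞, (edges.filter (fun e => χ e = C)).card :=
    Finset.card_eq_sum_card_fiberwise (fun e he => (hχ e (hfin.mem_toFinset.mp he)).1)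
  have hswap : ∑ C ∈ 𝒞, (Finset.univ.filter (fun v => D.pos v ∈ C)).card = ∑ v : V, t v := by
    simp_rw [htdef, Finset.card_filter]; exact Finset.sum_comm
  have hmI : m ≤ ∑ v : V, t v := by
    rw [hm_edges, hfiber, ← hswap]
    exact Finset.sum_le_sum hA
  -- Step C : second moment bound
  have hCnat : ∑ v : V, t v * (t v - 1) ≤ 2 * (r * r - r) := by
    have htt : ∀ v : V, t v * (t v - 1) =
        ((𝒞.offDiag).filter (fun q => D.pos v ∈ q.1 ∧ D.pos v ∈ q.2)).card := by
      intro v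
      have h1 : (𝒞.filter (fun C => D.pos v ∈ C)).offDiag
          = 𝒞.offDiag.filter (fun q => D.pos v ∈ q.1 ∧ D.pos v ∈ q.2) := by
        ext ⟨a, b⟩
        simp only [Finset.mem_offDiag, Finset.mem_filter]
        tauto
      rw [htdef]
      simp only []
      rw [nat_mul_pred, ← Finset.offDiag_card, h1]
    have hpair : ∀ q ∈ 𝒞.offDiag,
        (Finset.univ.filter (fun v => D.pos v ∈ q.1 ∧ D.pos v ∈ q.2)).card ≤ 2 := by
      rintro ⟨C, C'⟩ hq
      rw [Finset.mem_offDiag] at hq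
      by_contra hgt
      push_neg at hgt
      obtain ⟨v₁, v₂, v₃, h1, h2, h3, h12, h13, h23⟩ := Finset.two_lt_card_iff.mp hgt
      rw [Finset.mem_filter] at h1 h2 h3
      exact circle_inter_lt_three (hcirc C hq.1) (hcirc C' hq.2.1) hq.2.2
        ⟨h1.2.1, h1.2.2⟩ ⟨h2.2.1, h2.2.2⟩ ⟨h3.2.1, h3.2.2⟩
        (fun h => h12 (D.inj h)) (fun h => h13 (D.inj h)) (fun h => h23 (D.inj h))
    calc ∑ v : V, t v * (t v - 1)
        = ∑ q ∈ 𝒞.offDiag, (Finset.univ.filter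
            (fun v => D.pos v ∈ q.1 ∧ D.pos v ∈ q.2)).card := by
          simp_rw [htt, Finset.card_filter]; exact Finset.sum_comm
      _ ≤ ∑ _q ∈ 𝒞.offDiag, 2 := Finset.sum_le_sum hpair
      _ = 2 * (𝒞.offDiag).card := by rw [Finset.sum_const, smul_eq_mul, mul_comm]
      _ = 2 * (r * r - r) := by rw [Finset.offDiag_card, hr]
  -- r ≥ 1
  have hr1 : 1 ≤ r := by
    have hm1 : 1 ≤ m := le_trans hn1 hnm
    have : edges.Nonempty := by
      rw [← Finset.card_pos, ← hm_edges]; exact hm1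
    obtain ⟨e, he⟩ := this
    have := (hχ e (hfin.mem_toFinset.mp he)).1
    rw [← hr]
    exact Finset.card_pos.mpr ⟨χ e, this⟩
  -- Cast everything to ℝ
  set In : ℕ := ∑ v : V, t v with hIn
  have hCS : ((In : ℝ)) ^ 2 ≤ (n : ℝ) * ∑ v : V, (t v : ℝ) ^ 2 := by
    have h := sq_sum_le_card_mul_sum_sq (s := (Finset.univ : Finset V))
      (f := fun v => (t v : ℝ))
    rw [Finset.card_univ, ← hn] at h
    have hcast : ((In : ℝ)) = ∑ v : V, (t v : ℝ) := by rw [hIn]; push_cast; rfl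
    rw [hcast]
    exact h
  have hsum2 : ∑ v : V, (t v : ℝ) ^ 2 ≤ 2 * ((r : ℝ) * r - r) + In := by
    have hnat : ∑ v : V, t v * t v ≤ 2 * (r * r - r) + In := by
      have : ∑ v : V, t v * t v = (∑ v : V, t v * (t v - 1)) + In := by
        rw [hIn, ← Finset.sum_add_distrib]
        exact Finset.sum_congr rfl (fun v _ => nat_mul_self_eq (t v))
      rw [this]
      exact Nat.add_le_add_right hCnat In
    have hrr : r ≤ r * r := Nat.le_mul_of_pos_left r hr1
    calc ∑ v : V, (t v : ℝ) ^ 2 = ((∑ v : V, t v * t v : ℕ) : ℝ) := by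
          push_cast; exact Finset.sum_congr rfl (fun v _ => sq (t v : ℝ) ▸ by ring)
      _ ≤ ((2 * (r * r - r) + In : ℕ) : ℝ) := by exact_mod_cast hnat
      _ = 2 * ((r : ℝ) * r - r) + In := by
          push_cast [Nat.cast_sub hrr]; ring
  -- combine
  have hn0 : (0 : ℝ) < n := by exact_mod_cast hn1
  have hmIr : (m : ℝ) ≤ In := by exact_mod_cast hmI
  have hnmr : (n : ℝ) ≤ m := by exact_mod_cast hnm
  have hIneq : ((In : ℝ)) ^ 2 ≤ (n : ℝ) * In + 2 * n * ((r : ℝ) * r - r) := by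
    calc ((In : ℝ)) ^ 2 ≤ (n : ℝ) * ∑ v : V, (t v : ℝ) ^ 2 := hCS
      _ ≤ (n : ℝ) * (2 * ((r : ℝ) * r - r) + In) := by
          apply mul_le_mul_of_nonneg_left hsum2 (le_of_lt hn0)
      _ = (n : ℝ) * In + 2 * n * ((r : ℝ) * r - r) := by ring
  have hmain : (m : ℝ) ^ 2 ≤ (n : ℝ) * m + 2 * n * ((r : ℝ) * r - r) := by
    nlinarith [mul_nonneg (sub_nonneg.mpr hmIr) (by linarith : (0 : ℝ) ≤ (In : ℝ) + m - n)]
  -- final algebra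
  have hr1r : (1 : ℝ) ≤ r := by exact_mod_cast hr1
  have hkey : 2 * (m : ℝ) ^ 2 / (n : ℝ) - 2 * m + 1 ≤ (2 * (r : ℝ) - 1) ^ 2 := by
    have hdiv : 2 * (m : ℝ) ^ 2 / (n : ℝ) ≤ 2 * m + 4 * ((r : ℝ) * r - r) := by
      rw [div_le_iff₀ hn0]
      nlinarith
    nlinarith
  have hsqrt : Real.sqrt (2 * (m : ℝ) ^ 2 / (n : ℝ) - 2 * m + 1) ≤ 2 * (r : ℝ) - 1 := by
    have h1 := Real.sqrt_le_sqrt hkey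
    rwa [Real.sqrt_sq (by linarith : (0 : ℝ) ≤ 2 * (r : ℝ) - 1)] at h1
  linarith
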